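/- Let G be a graph and v a vertex of G. Then J_{G_v} equals the intersection of the ideals P_T(G) over all subsets T ⊆ V(G) with v ∉ T. -/

import Mathlib

/-- The graph `G_v` on the vertex set of `G`, whose edges are those of `G` together with all
pairs of distinct neighbours of `v`. -/
def SimpleGraph.gv {V : Type*} (G : SimpleGraph V) (v : V) : SimpleGraph V where
  Adj u w := u ≠ w ∧ (G.Adj u w ∨ (G.Adj v u ∧ G.Adj v w))
  symm := by
    constructor
    rintro u w ⟨h1, h2⟩
    exact ⟨h1.symm, h2.imp (fun h => h.symm) (fun h => ⟨h.2, h.1⟩)⟩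
  loopless := ⟨fun u h => h.1 rfl⟩

/-- The graph obtained from `G` by removing all edges meeting `T`.  Vertices of `T` become
isolated, and the connected components of vertices outside of `T` are exactly the connected
components of the induced subgraph `G - T`; in particular two vertices `u, w ∉ T` lie in the
same connected component of `G - T` iff they are reachable in `G.avoid T`. -/
def SimpleGraph.avoid {V : Type*} (G : SimpleGraph V) (T : Set V) : SimpleGraph V where
  Adj u w := G.Adj u w ∧ u ∉ T ∧ w ∉ T
  symm := ⟨fun _ _ h => ⟨h.1.symm, h.2.2, h.2.1⟩⟩
  loopless := ⟨fun u h => G.loopless.irrefl u h.1⟩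

/-- The binomial `f_{ij} = x_i y_j - x_j y_i` in `S = K[x_1,…,x_n,y_1,…,y_n]`, where the
polynomial ring is realized as `MvPolynomial (V ⊕ V) K`, `x_i = X (Sum.inl i)` and
`y_i = X (Sum.inr i)`. -/
noncomputable def edgeBinomial (K : Type*) [Field K] {V : Type*} (i j : V) :
    MvPolynomial (V ⊕ V) K :=
  MvPolynomial.X (Sum.inl i) * MvPolynomial.X (Sum.inr j) -
    MvPolynomial.X (Sum.inl j) * MvPolynomial.X (Sum.inr i)

/-- The binomial edge ideal `J_G` of a graph `G`, generated by the binomials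
`f_{ij} = x_i y_j - x_j y_i` for all edges `{i,j}` of `G`. -/
noncomputable def binomialEdgeIdeal (K : Type*) [Field K] {V : Type*} (G : SimpleGraph V) :
    Ideal (MvPolynomial (V ⊕ V) K) :=
  Ideal.span {f | ∃ i j : V, G.Adj i j ∧ f = edgeBinomial K i j}

/-- The ideal `P_T(G) = (x_v, y_v : v ∈ T) + J_{K_1} + … + J_{K_{c(T)}}`, where
`K_1, …, K_{c(T)}` are the complete graphs on the vertex sets of the connected components
of `G - T`; equivalently, it is generated by the variables `x_v, y_v` for `v ∈ T` together
with the binomials `f_{uw}` for all pairs of distinct vertices `u, w ∉ T` lying in the same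
connected component of `G - T`. -/
noncomputable def primeIdealP (K : Type*) [Field K] {V : Type*} (G : SimpleGraph V)
    (T : Set V) : Ideal (MvPolynomial (V ⊕ V) K) :=
  Ideal.span
    ({f | ∃ v ∈ T, f = MvPolynomial.X (Sum.inl v) ∨ f = MvPolynomial.X (Sum.inr v)} ∪
      {f | ∃ u w : V, u ∉ T ∧ w ∉ T ∧ u ≠ w ∧ (G.avoid T).Reachable u w ∧
        f = edgeBinomial K u w})

namespace BEIaux

open MvPolynomial Finset
open scoped Classical

variable {V : Type*} {K : Type*} [Field K]

/-- multidegree of an exponent vector -/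
def mdeg (E : (V ⊕ V) →₀ ℕ) : V → ℕ := fun t => E (Sum.inl t) + E (Sum.inr t)

noncomputable def ind (u : V) : V → ℕ := fun t => if u = t then 1 else 0

lemma mdeg_add (E F : (V ⊕ V) →₀ ℕ) : mdeg (E + F) = mdeg E + mdeg F := by
  funext t; simp [mdeg]; ring

lemma mdeg_single_inl (u : V) :
    mdeg (Finsupp.single (Sum.inl u) 1 : (V ⊕ V) →₀ ℕ) = ind u := by
  funext t; simp [mdeg, ind, Finsupp.single_apply]

lemma mdeg_single_inr (u : V) :
    mdeg (Finsupp.single (Sum.inr u) 1 : (V ⊕ V) →₀ ℕ) = ind u := by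
  funext t; simp [mdeg, ind, Finsupp.single_apply]

noncomputable def fpoly (pred : ((V ⊕ V) →₀ ℕ) → Prop) (p : MvPolynomial (V ⊕ V) K) :
    MvPolynomial (V ⊕ V) K :=
  ∑ e ∈ p.support.filter pred, monomial e (coeff e p)

lemma coeff_fpoly (pred : ((V ⊕ V) →₀ ℕ) → Prop) (p : MvPolynomial (V ⊕ V) K)
    (E : (V ⊕ V) →₀ ℕ) :
    coeff E (fpoly pred p) = if pred E then coeff E p else 0 := by
  rw [fpoly, coeff_sum]
  simp only [coeff_monomial]
  rw [Finset.sum_ite_eq' (p.support.filter pred) E (fun e => coeff e p)]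
  by_cases hp : pred E <;> by_cases hs : E ∈ p.support <;>
    simp_all [MvPolynomial.notMem_support_iff]

lemma fpoly_add (pred : ((V ⊕ V) →₀ ℕ) → Prop) (p q : MvPolynomial (V ⊕ V) K) :
    fpoly pred (p + q) = fpoly pred p + fpoly pred q := by
  apply MvPolynomial.ext; intro E
  simp only [coeff_fpoly, coeff_add]
  split <;> simp

noncomputable def fpolyHom (pred : ((V ⊕ V) →₀ ℕ) → Prop) :
    MvPolynomial (V ⊕ V) K →+ MvPolynomial (V ⊕ V) K :=
  AddMonoidHom.mk' (fpoly pred) (fpoly_add pred)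

lemma fpoly_eq_zero {pred : ((V ⊕ V) →₀ ℕ) → Prop} {p : MvPolynomial (V ⊕ V) K}
    (h : ∀ e ∈ p.support, ¬ pred e) : fpoly pred p = 0 := by
  apply MvPolynomial.ext; intro E
  rw [coeff_fpoly]
  by_cases hp : pred E
  · have : E ∉ p.support := fun hE => h E hE hp
    simp [hp, MvPolynomial.notMem_support_iff.mp this]
  · simp [hp]

lemma fpoly_eq_self {pred : ((V ⊕ V) →₀ ℕ) → Prop} {p : MvPolynomial (V ⊕ V) K}
    (h : ∀ e ∈ p.support, pred e) : fpoly pred p = p := by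
  apply MvPolynomial.ext; intro E
  rw [coeff_fpoly]
  by_cases hp : pred E
  · simp [hp]
  · have : E ∉ p.support := fun hE => hp (h E hE)
    simp [hp, MvPolynomial.notMem_support_iff.mp this]

lemma sum_fpoly (p : MvPolynomial (V ⊕ V) K) :
    ∑ a ∈ p.support.image mdeg, fpoly (fun e => mdeg e = a) p = p := by
  apply MvPolynomial.ext; intro E
  rw [coeff_sum]
  simp only [coeff_fpoly]
  rw [Finset.sum_ite_eq (p.support.image mdeg) (mdeg E) (fun _ => coeff E p)]
  by_cases hs : E ∈ p.support
  · simp [Finset.mem_image_of_mem mdeg hs]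
  · split <;> simp [MvPolynomial.notMem_support_iff.mp hs]

lemma fpoly_mul_homog {d a : V → ℕ} {s : MvPolynomial (V ⊕ V) K}
    (hs : ∀ e ∈ s.support, mdeg e = d) (r : MvPolynomial (V ⊕ V) K) :
    fpoly (fun e => mdeg e = a) (r * s) = fpoly (fun e => mdeg e + d = a) r * s := by
  induction r using MvPolynomial.induction_on' with
  | add p q hp hq => rw [add_mul, fpoly_add, fpoly_add, hp, hq, add_mul]
  | monomial e c =>
    have hmono : fpoly (fun e => mdeg e + d = a) (monomial e c) =
        if mdeg e + d = a then monomial e c else 0 := by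
      by_cases h : mdeg e + d = a
      · rw [if_pos h]
        exact fpoly_eq_self (fun e' he' => by
          have : e' = e := Finset.mem_singleton.mp (support_monomial_subset he')
          rw [this]; exact h)
      · rw [if_neg h]
        exact fpoly_eq_zero (fun e' he' hc => by
          have : e' = e := Finset.mem_singleton.mp (support_monomial_subset he')
          exact h (this ▸ hc))
    have hsupp : ∀ e' ∈ (monomial e c * s).support, mdeg e' = mdeg e + d := by
      intro e' he'
      have := MvPolynomial.support_mul (monomial e c) s he'
      rw [Finset.mem_add] at this
      obtain ⟨e₁, he₁, e₂, he₂, rfl⟩ := this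
      have he₁' : e₁ = e := Finset.mem_singleton.mp (support_monomial_subset he₁)
      rw [he₁', mdeg_add, hs e₂ he₂]
    rw [hmono]
    by_cases h : mdeg e + d = a
    · rw [if_pos h]
      exact fpoly_eq_self (fun e' he' => (hsupp e' he').trans h)
    · rw [if_neg h, zero_mul]
      exact fpoly_eq_zero (fun e' he' hc => h ((hsupp e' he').symm.trans hc))



variable (G : SimpleGraph V) (v : V)

lemma mem_J_of_adj {u w : V} (h : (G.gv v).Adj u w) (r : MvPolynomial (V ⊕ V) K) :
    edgeBinomial K u w * r ∈ binomialEdgeIdeal K (G.gv v) :=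
  Ideal.mul_mem_right _ _ (Ideal.subset_span ⟨u, w, h, rfl⟩)

lemma idX (u w t : V) :
    edgeBinomial K u w * X (Sum.inl t) =
      edgeBinomial K t w * X (Sum.inl u) + edgeBinomial K u t * X (Sum.inl w) := by
  unfold edgeBinomial; ring

lemma idY (u w t : V) :
    edgeBinomial K u w * X (Sum.inr t) =
      edgeBinomial K t w * X (Sum.inr u) + edgeBinomial K u t * X (Sum.inr w) := by
  unfold edgeBinomial; ring

lemma X_mul_monomial_one (i : V ⊕ V) (E : (V ⊕ V) →₀ ℕ) :
    (X i : MvPolynomial (V ⊕ V) K) * monomial E 1 = monomial (Finsupp.single i 1 + E) 1 := by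
  rw [X, monomial_mul, one_mul]

lemma mdeg_support_edgeBinomial (u w : V) :
    ∀ e ∈ (edgeBinomial K u w).support, mdeg e = ind u + ind w := by
  intro e he
  have h1 : edgeBinomial K u w =
      monomial (Finsupp.single (Sum.inl u) 1 + Finsupp.single (Sum.inr w) 1) (1 : K) -
      monomial (Finsupp.single (Sum.inl w) 1 + Finsupp.single (Sum.inr u) 1) (1 : K) := by
    rw [edgeBinomial, X, X, X, X, monomial_mul, monomial_mul, one_mul]
  rw [h1] at he
  have := MvPolynomial.support_sub _ _ _ he
  rw [Finset.mem_union] at this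
  rcases this with h | h
  · have := Finset.mem_singleton.mp (support_monomial_subset h)
    rw [this, mdeg_add, mdeg_single_inl, mdeg_single_inr]
  · have := Finset.mem_singleton.mp (support_monomial_subset h)
    rw [this, mdeg_add, mdeg_single_inl, mdeg_single_inr, add_comm]

lemma monomial_split {E : (V ⊕ V) →₀ ℕ} {i : V ⊕ V} (h : E i ≠ 0) :
    ∃ E' : (V ⊕ V) →₀ ℕ, E = Finsupp.single i 1 + E' := by
  refine ⟨E - Finsupp.single i 1, ?_⟩
  ext j
  rw [Finsupp.add_apply, Finsupp.tsub_apply, Finsupp.single_apply]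
  rcases eq_or_ne i j with rfl | hj
  · rw [if_pos rfl]; omega
  · rw [if_neg hj]; omega

/-- The pivot step: if `r` is a vertex adjacent to `u` in `G_v`, the monomial `E` contains a
variable of `r`, and all multiples of `f_{rw}` of the right multidegree are in `J`, then
`f_{uw} * monomial E 1 ∈ J`. -/
lemma pivot_step {a : V → ℕ} {u w r : V} (hur : (G.gv v).Adj u r)
    (hr : ∀ F : (V ⊕ V) →₀ ℕ, mdeg F + ind r + ind w = a →
      edgeBinomial K r w * monomial F 1 ∈ binomialEdgeIdeal K (G.gv v))
    {E : (V ⊕ V) →₀ ℕ} (hE : mdeg E + ind u + ind w = a)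
    (hEr : E (Sum.inl r) ≠ 0 ∨ E (Sum.inr r) ≠ 0) :
    edgeBinomial K u w * monomial E 1 ∈ binomialEdgeIdeal K (G.gv v) := by
  rcases hEr with hEr | hEr
  · obtain ⟨E', rfl⟩ := monomial_split hEr
    rw [← X_mul_monomial_one, ← mul_assoc, idX, add_mul, mul_assoc, mul_assoc,
      X_mul_monomial_one, X_mul_monomial_one]
    refine Ideal.add_mem _ (hr _ ?_) (mem_J_of_adj G v hur _)
    rw [mdeg_add, mdeg_single_inl] at hE ⊢
    rw [← hE]; funext t; simp [ind]; ring
  · obtain ⟨E', rfl⟩ := monomial_split hEr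
    rw [← X_mul_monomial_one, ← mul_assoc, idY, add_mul, mul_assoc, mul_assoc,
      X_mul_monomial_one, X_mul_monomial_one]
    refine Ideal.add_mem _ (hr _ ?_) (mem_J_of_adj G v hur _)
    rw [mdeg_add, mdeg_single_inr] at hE ⊢
    rw [← hE]; funext t; simp [ind]; ring

lemma path_lemma (a : V → ℕ) :
    ∀ n : ℕ, ∀ u w : V, u ≠ w →
      ∀ p : (G.avoid {t | a t = 0 ∧ t ≠ v}).Walk u w, p.length = n →
      ∀ E : (V ⊕ V) →₀ ℕ, mdeg E + ind u + ind w = a →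
      edgeBinomial K u w * monomial E 1 ∈ binomialEdgeIdeal K (G.gv v) := by
  intro n
  induction n using Nat.strong_induction_on with
  | _ n IH =>
    intro u w hne p hp E hE
    by_cases hadj : (G.gv v).Adj u w
    · exact mem_J_of_adj G v hadj _
    cases p with
    | nil => exact absurd rfl hne
    | @cons _ t _ h q =>
      have htu : t ≠ u := fun h' => G.loopless.irrefl u (h' ▸ h.1)
      have htw : t ≠ w := fun h' => hadj ⟨hne, Or.inl (h' ▸ h.1)⟩
      have hlen : q.length + 1 = n := by simpa using hp
      by_cases hat : a t = 0
      · -- t must be v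
        have htv : t = v := by
          by_contra htv
          exact h.2.2 ⟨hat, htv⟩
        cases q with
        | nil => exact absurd rfl htw
        | @cons _ s _ h2 q2 =>
          rw [htv] at h h2
          have hsv : s ≠ v := fun h' => G.loopless.irrefl v (h' ▸ h2.1)
          have hlen2 : q2.length + 2 = n := by simpa using hp
          have has : a s ≠ 0 := fun h' => h2.2.2 ⟨h', hsv⟩
          by_cases hsu : s = u
          · subst s
            exact IH q2.length (by omega) u w hne q2 rfl E hE
          by_cases hsw : s = w
          · subst s
            exact absurd ⟨hne, Or.inr ⟨h.1.symm, h2.1⟩⟩ hadj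
          · -- pivot at s
            have hEs : E (Sum.inl s) ≠ 0 ∨ E (Sum.inr s) ≠ 0 := by
              by_contra hc
              push_neg at hc
              have := congrFun hE s
              simp [mdeg, ind, hc.1, hc.2, Ne.symm hsu, Ne.symm hsw] at this
              exact has this.symm
            refine pivot_step G v ⟨fun h' => hsu h'.symm, Or.inr ⟨h.1.symm, h2.1⟩⟩
              (fun F hF => IH q2.length (by omega) s w hsw q2 rfl F hF) hE hEs
      · -- t has positive degree : pivot at t
        have hEt : E (Sum.inl t) ≠ 0 ∨ E (Sum.inr t) ≠ 0 := by
          by_contra hc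
          push_neg at hc
          have := congrFun hE t
          simp [mdeg, ind, hc.1, hc.2, Ne.symm htu, Ne.symm htw] at this
          exact hat this.symm
        refine pivot_step G v ⟨fun h' => htu h'.symm, Or.inl h.1⟩
          (fun F hF => IH q.length (by omega) t w htw q rfl F hF) hE hEt

lemma comp_mem (a : V → ℕ) (g : MvPolynomial (V ⊕ V) K)
    (hg : g ∈ primeIdealP K G {t | a t = 0 ∧ t ≠ v}) :
    fpoly (fun e => mdeg e = a) g ∈ binomialEdgeIdeal K (G.gv v) := by
  obtain ⟨m, c, gen, rfl⟩ := Submodule.mem_span_set'.mp hg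
  have hsum : fpoly (fun e => mdeg e = a) (∑ i, c i • (gen i : MvPolynomial (V ⊕ V) K)) =
      ∑ i, fpoly (fun e => mdeg e = a) (c i • (gen i : MvPolynomial (V ⊕ V) K)) :=
    map_sum (fpolyHom _) _ _
  rw [hsum]
  apply Ideal.sum_mem
  intro i _
  rw [smul_eq_mul]
  rcases (gen i).2 with ⟨t, ht, hX⟩ | ⟨u, w, huT, hwT, hne, hreach, heq⟩
  · -- variable generator : the component is zero
    have hat : a t = 0 := ht.1
    have hz : ∀ e ∈ (c i * (gen i : MvPolynomial (V ⊕ V) K)).support, ¬ mdeg e = a := by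
      intro e he hc'
      have hsub := MvPolynomial.support_mul (c i) ((gen i : MvPolynomial (V ⊕ V) K)) he
      rw [Finset.mem_add] at hsub
      obtain ⟨e₁, he₁, e₂, he₂, rfl⟩ := hsub
      have h2 : mdeg e₂ t = 1 := by
        rcases hX with hX | hX <;>
        · rw [hX, MvPolynomial.support_X] at he₂
          rw [Finset.mem_singleton.mp he₂]
          simp [mdeg, Finsupp.single_apply]
      have hcc := congrFun hc' t
      rw [mdeg_add] at hcc
      simp only [Pi.add_apply, h2, hat] at hcc
      omega
    rw [fpoly_eq_zero hz]
    exact zero_mem _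
  · rw [heq, fpoly_mul_homog (mdeg_support_edgeBinomial u w), fpoly, Finset.sum_mul]
    apply Ideal.sum_mem
    intro E hEmem
    have hpred : mdeg E + (ind u + ind w) = a := (Finset.mem_filter.mp hEmem).2
    obtain ⟨pth⟩ := hreach
    have hmem := path_lemma (K := K) G v a pth.length u w hne pth rfl E
      (by rw [add_assoc]; exact hpred)
    have h1 : (monomial E (coeff E (c i)) : MvPolynomial (V ⊕ V) K) =
        C (coeff E (c i)) * monomial E 1 := by rw [C_mul_monomial, mul_one]
    rw [h1, mul_assoc, mul_comm ((monomial E 1 : MvPolynomial (V ⊕ V) K)) (edgeBinomial K u w)]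
    exact Ideal.mul_mem_left _ _ hmem

lemma J_le_P (T : Set V) (hT : v ∉ T) :
    binomialEdgeIdeal K (G.gv v) ≤ primeIdealP K G T := by
  rw [binomialEdgeIdeal, Ideal.span_le]
  rintro f ⟨u, w, ⟨hne, hadj⟩, rfl⟩
  by_cases huT : u ∈ T
  · have hx : (X (Sum.inl u) : MvPolynomial (V ⊕ V) K) ∈ primeIdealP K G T :=
      Ideal.subset_span (Or.inl ⟨u, huT, Or.inl rfl⟩)
    have hy : (X (Sum.inr u) : MvPolynomial (V ⊕ V) K) ∈ primeIdealP K G T :=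
      Ideal.subset_span (Or.inl ⟨u, huT, Or.inr rfl⟩)
    have heq : edgeBinomial K u w =
        X (Sum.inr w) * X (Sum.inl u) - X (Sum.inl w) * X (Sum.inr u) := by
      rw [edgeBinomial]; ring
    rw [heq]
    exact sub_mem (Ideal.mul_mem_left _ _ hx) (Ideal.mul_mem_left _ _ hy)
  by_cases hwT : w ∈ T
  · have hx : (X (Sum.inl w) : MvPolynomial (V ⊕ V) K) ∈ primeIdealP K G T :=
      Ideal.subset_span (Or.inl ⟨w, hwT, Or.inl rfl⟩)
    have hy : (X (Sum.inr w) : MvPolynomial (V ⊕ V) K) ∈ primeIdealP K G T :=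
      Ideal.subset_span (Or.inl ⟨w, hwT, Or.inr rfl⟩)
    have heq : edgeBinomial K u w =
        X (Sum.inl u) * X (Sum.inr w) - X (Sum.inr u) * X (Sum.inl w) := by
      rw [edgeBinomial]; ring
    rw [heq]
    exact sub_mem (Ideal.mul_mem_left _ _ hy) (Ideal.mul_mem_left _ _ hx)
  · have hreach : (G.avoid T).Reachable u w := by
      rcases hadj with h | h
      · exact ⟨SimpleGraph.Walk.cons ⟨h, huT, hwT⟩ SimpleGraph.Walk.nil⟩
      · exact ⟨SimpleGraph.Walk.cons ⟨h.1.symm, huT, hT⟩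
          (SimpleGraph.Walk.cons ⟨h.2, hT, hwT⟩ SimpleGraph.Walk.nil)⟩
    exact Ideal.subset_span (Or.inr ⟨u, w, huT, hwT, hne, hreach, rfl⟩)

end BEIaux

/-- Let `G` be a graph and `v` a vertex of `G`.  Then `J_{G_v}` equals the intersection of
the ideals `P_T(G)` over all subsets `T ⊆ V(G)` with `v ∉ T`. -/
theorem binomialEdgeIdeal_gv_eq_inf {V K : Type*} [Fintype V] [Field K] (G : SimpleGraph V)
    (v : V) :
    binomialEdgeIdeal K (G.gv v) =
      ⨅ T ∈ {T : Set V | v ∉ T}, primeIdealP K G T := by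
  apply le_antisymm
  · exact le_iInf fun T => le_iInf fun hT => BEIaux.J_le_P G v T hT
  · intro f hf
    have hf' : ∀ T : Set V, v ∉ T → f ∈ primeIdealP K G T := by
      intro T hT
      have h1 := (Submodule.mem_iInf _).mp hf T
      exact (Submodule.mem_iInf _).mp h1 hT
    rw [← BEIaux.sum_fpoly f]
    refine Ideal.sum_mem _ fun a _ => ?_
    exact BEIaux.comp_mem G v a f (hf' _ (by simp))
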